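/- Let G be the vertex-amalgamation of n ≥ 2 paths (each with terminal vertex an internal, non-leaf vertex) and complete graphs of order at least 3, consisting of k paths and n − k complete graphs K_{m_1},…,K_{m_{n-k}}. Then dim(G) = Σ_{i=1}^{n-k} (m_i − 2) + max(k, 1) + (k − 1) when k ≥ 1; in particular, replacing one complete graph block by such a path increases the metric dimension formula Σ dim(G_i) − n by exactly one per replaced path. -/

import Mathlib

open SimpleGraph

def resolves {V : Type*} (G : SimpleGraph V) (W : Finset V) : Prop :=
  ∀ u v : V, (∀ w ∈ W, G.dist u w = G.dist v w) → u = v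

noncomputable def metricDim {V : Type*} [Fintype V] (G : SimpleGraph V) : ℕ :=
  sInf {k | ∃ W : Finset V, resolves G W ∧ W.card = k}

def IsVertexAmalMap {ι V : Type*} {Vi : ι → Type*}
    (Gs : ∀ i, SimpleGraph (Vi i)) (v0 : ∀ i, Vi i)
    (G : SimpleGraph V) (v : V) (f : ∀ i, Vi i → V) : Prop :=
  (∀ i, Function.Injective (f i)) ∧
  (∀ i, f i (v0 i) = v) ∧
  (∀ i x y, G.Adj (f i x) (f i y) ↔ (Gs i).Adj x y) ∧
  (∀ i j x y, i ≠ j → f i x = f j y → f i x = v) ∧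
  (∀ a : V, ∃ i x, f i x = a) ∧
  (∀ a b : V, G.Adj a b → ∃ i x y, f i x = a ∧ f i y = b)

def IsVertexAmal {ι V : Type*} {Vi : ι → Type*}
    (Gs : ∀ i, SimpleGraph (Vi i)) (v0 : ∀ i, Vi i)
    (G : SimpleGraph V) (v : V) : Prop :=
  ∃ f, IsVertexAmalMap Gs v0 G v f

def IsEdgeAmalMap {ι V : Type*} {Vi : ι → Type*}
    (Gs : ∀ i, SimpleGraph (Vi i)) (u0 w0 : ∀ i, Vi i)
    (G : SimpleGraph V) (u w : V) (f : ∀ i, Vi i → V) : Prop :=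
  (∀ i, (Gs i).Adj (u0 i) (w0 i)) ∧
  (∀ i, Function.Injective (f i)) ∧
  (∀ i, f i (u0 i) = u) ∧
  (∀ i, f i (w0 i) = w) ∧
  (∀ i x y, G.Adj (f i x) (f i y) ↔ (Gs i).Adj x y) ∧
  (∀ i j x y, i ≠ j → f i x = f j y → f i x = u ∨ f i x = w) ∧
  (∀ a : V, ∃ i x, f i x = a) ∧
  (∀ a b : V, G.Adj a b → ∃ i x y, f i x = a ∧ f i y = b)

def IsEdgeAmal {ι V : Type*} {Vi : ι → Type*}
    (Gs : ∀ i, SimpleGraph (Vi i)) (u0 w0 : ∀ i, Vi i)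
    (G : SimpleGraph V) (u w : V) : Prop :=
  ∃ f, IsEdgeAmalMap Gs u0 w0 G u w f


lemma weak_hom_walk {V V' : Type*} {G : SimpleGraph V} {G' : SimpleGraph V'} (p : V → V')
    (hp : ∀ a b, G.Adj a b → G'.Adj (p a) (p b) ∨ p a = p b) {u v : V} (w : G.Walk u v) :
    ∃ w' : G'.Walk (p u) (p v), w'.length ≤ w.length := by
  induction w with
  | nil => exact ⟨SimpleGraph.Walk.nil, le_refl _⟩
  | cons h q ih =>
      obtain ⟨w', hw'⟩ := ih
      rcases hp _ _ h with hadj | heq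
      · exact ⟨SimpleGraph.Walk.cons hadj w', by simpa using Nat.succ_le_succ hw'⟩
      · rw [heq]; exact ⟨w', hw'.trans (Nat.le_succ _)⟩

lemma weak_hom_dist_le {V V' : Type*} {G : SimpleGraph V} {G' : SimpleGraph V'} (p : V → V')
    (hp : ∀ a b, G.Adj a b → G'.Adj (p a) (p b) ∨ p a = p b) {u v : V}
    (hr : G.Reachable u v) : G'.dist (p u) (p v) ≤ G.dist u v := by
  obtain ⟨w, hw⟩ := hr.exists_walk_length_eq_dist
  obtain ⟨w', hw'⟩ := weak_hom_walk p hp w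
  exact (SimpleGraph.dist_le w').trans (hw ▸ hw')

lemma pathGraph_walk_exists {n : ℕ} (a b : ℕ) (ha : a < n) (hb : b < n) (hab : a ≤ b) :
    ∃ w : (pathGraph n).Walk ⟨a, ha⟩ ⟨b, hb⟩, w.length = b - a := by
  obtain ⟨d, rfl⟩ : ∃ d, b = a + d := ⟨b - a, by omega⟩
  clear hab
  induction d generalizing a with
  | zero => exact ⟨SimpleGraph.Walk.nil.copy rfl (by ext; simp), by simp⟩
  | succ d ih =>
      have ha1 : a + 1 < n := by omega
      obtain ⟨w, hw⟩ := ih (a+1) ha1 (by omega)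
      have hadj : (pathGraph n).Adj ⟨a, ha⟩ ⟨a+1, ha1⟩ := by
        rw [pathGraph_adj]; left; rfl
      refine ⟨SimpleGraph.Walk.cons hadj (w.copy rfl (by ext; simp; omega)), ?_⟩
      simp only [SimpleGraph.Walk.length_cons, SimpleGraph.Walk.length_copy, hw]; omega

lemma pathGraph_dist_le {n : ℕ} (x y : Fin n) : (pathGraph n).dist x y ≤ Nat.dist x.1 y.1 := by
  rcases le_total x.1 y.1 with hle | hle
  · obtain ⟨w, hw⟩ := pathGraph_walk_exists x.1 y.1 x.2 y.2 hle
    have := SimpleGraph.dist_le w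
    simpa [hw, Nat.dist_eq_sub_of_le hle] using this
  · obtain ⟨w, hw⟩ := pathGraph_walk_exists y.1 x.1 y.2 x.2 hle
    have := SimpleGraph.dist_le w.reverse
    rw [SimpleGraph.Walk.length_reverse, hw] at this
    simpa [Nat.dist_eq_sub_of_le_right hle] using this

lemma le_walk_length_pathGraph {n : ℕ} {x y : Fin n} (w : (pathGraph n).Walk x y) :
    Nat.dist x.1 y.1 ≤ w.length := by
  induction w with
  | nil => simp [Nat.dist_self]
  | cons h q ih =>
      rename_i a b c
      have h1 : Nat.dist a.1 b.1 = 1 := by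
        rw [pathGraph_adj] at h
        rcases h with h | h <;> simp [Nat.dist] <;> omega
      calc Nat.dist a.1 c.1 ≤ Nat.dist a.1 b.1 + Nat.dist b.1 c.1 :=
            Nat.dist.triangle_inequality _ _ _
        _ ≤ 1 + q.length := by rw [h1]; omega
        _ = q.length + 1 := by omega

lemma pathGraph_dist {n : ℕ} (x y : Fin n) : (pathGraph n).dist x y = Nat.dist x.1 y.1 := by
  refine le_antisymm (pathGraph_dist_le x y) ?_
  have hr : (pathGraph n).Reachable x y := (pathGraph_preconnected n) x y
  obtain ⟨w, hw⟩ := hr.exists_walk_length_eq_dist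
  exact hw ▸ le_walk_length_pathGraph w


lemma weak_hom_walk' {V V' : Type*} {G : SimpleGraph V} {G' : SimpleGraph V'} (p : V → V')
    (hp : ∀ a b, G.Adj a b → G'.Adj (p a) (p b) ∨ p a = p b) {u v : V} (w : G.Walk u v) :
    ∃ w' : G'.Walk (p u) (p v), w'.length ≤ w.length := by
  induction w with
  | nil => exact ⟨SimpleGraph.Walk.nil, le_refl _⟩
  | cons h q ih =>
      obtain ⟨w', hw'⟩ := ih
      rcases hp _ _ h with hadj | heq
      · exact ⟨SimpleGraph.Walk.cons hadj w', by simpa using Nat.succ_le_succ hw'⟩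
      · rw [heq]; exact ⟨w', hw'.trans (Nat.le_succ _)⟩


section Amal
variable {ι V : Type*} {Vi : ι → Type*} {Gs : ∀ i, SimpleGraph (Vi i)} {v0 : ∀ i, Vi i}
  {G : SimpleGraph V} {v : V} {f : ∀ i, Vi i → V}

open Classical in
noncomputable def amalProj (f : ∀ i, Vi i → V) (v0 : ∀ i, Vi i) (i : ι) (a : V) : Vi i :=
  if h : ∃ x, f i x = a then h.choose else v0 i

variable (hf : IsVertexAmalMap Gs v0 G v f)

include hf

lemma amal_ne_v {i : ι} {x : Vi i} (hx : x ≠ v0 i) : f i x ≠ v := by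
  intro hvx
  exact hx (hf.1 i (hvx.trans (hf.2.1 i).symm))

lemma amalProj_f {i : ι} (x : Vi i) : amalProj f v0 i (f i x) = x := by
  have h : ∃ y, f i y = f i x := ⟨x, rfl⟩
  rw [amalProj, dif_pos h]
  exact hf.1 i h.choose_spec

lemma amalProj_other {i l : ι} (hli : l ≠ i) (z : Vi l) : amalProj f v0 i (f l z) = v0 i := by
  rw [amalProj]
  split_ifs with h
  · have hv : f i h.choose = v := hf.2.2.2.1 i l h.choose z hli.symm h.choose_spec
    exact hf.1 i (hv.trans (hf.2.1 i).symm)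
  · rfl

lemma amal_weak_hom (i : ι) : ∀ a b, G.Adj a b →
    (Gs i).Adj (amalProj f v0 i a) (amalProj f v0 i b) ∨
      amalProj f v0 i a = amalProj f v0 i b := by
  intro a b hab
  obtain ⟨l, x, y, hx, hy⟩ := hf.2.2.2.2.2 a b hab
  subst hx; subst hy
  by_cases hl : l = i
  · subst hl
    rw [amalProj_f hf, amalProj_f hf]
    exact Or.inl ((hf.2.2.1 l x y).mp hab)
  · rw [amalProj_other hf hl, amalProj_other hf hl]
    exact Or.inr rfl

/-- homomorphism from a block into G -/
def amalHom (hf : IsVertexAmalMap Gs v0 G v f) (i : ι) : (Gs i) →g G where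
  toFun := f i
  map_rel' := fun h => (hf.2.2.1 _ _ _).mpr h

lemma amal_reachable {i : ι} (hci : (Gs i).Connected) (x y : Vi i) :
    G.Reachable (f i x) (f i y) := by
  obtain ⟨w⟩ := hci x y
  exact ⟨w.map (amalHom hf i)⟩

lemma amal_dist_block {i : ι} (hci : (Gs i).Connected) (x y : Vi i) :
    G.dist (f i x) (f i y) = (Gs i).dist x y := by
  refine le_antisymm ?_ ?_
  · obtain ⟨w, hw⟩ := (hci x y).exists_walk_length_eq_dist
    have := SimpleGraph.dist_le (w.map (amalHom hf i))
    rwa [SimpleGraph.Walk.length_map, hw] at this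
  · have := weak_hom_dist_le (amalProj f v0 i) (amal_weak_hom hf i)
      (amal_reachable hf hci x y)
    rwa [amalProj_f hf, amalProj_f hf] at this

lemma amal_preconnected (hconn : ∀ i, (Gs i).Connected) : G.Preconnected := by
  intro a b
  obtain ⟨i, x, rfl⟩ := hf.2.2.2.2.1 a
  obtain ⟨j, y, rfl⟩ := hf.2.2.2.2.1 b
  have h1 : G.Reachable (f i x) v := (hf.2.1 i) ▸ amal_reachable hf (hconn i) x (v0 i)
  have h2 : G.Reachable (f j (v0 j)) (f j y) := amal_reachable hf (hconn j) (v0 j) y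
  exact h1.trans ((hf.2.1 j) ▸ h2)

lemma amal_connected (hconn : ∀ i, (Gs i).Connected) : G.Connected :=
  haveI : Nonempty V := ⟨v⟩
  SimpleGraph.Connected.mk (amal_preconnected hf hconn)

lemma amal_walk_stay (i : ι) {a b : V} (w : G.Walk a b) (hv : v ∉ w.support)
    (ha : ∃ x, f i x = a) : ∃ y, f i y = b := by
  induction w with
  | nil => exact ha
  | cons h q ih =>
      rename_i c d e
      obtain ⟨l, x, y, hx, hy⟩ := hf.2.2.2.2.2 c d h
      have hcv : c ≠ v := by
        intro hcv; exact hv (hcv ▸ SimpleGraph.Walk.start_mem_support _)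
      by_cases hl : l = i
      · subst hl
        exact ih (by intro hm; exact hv (by simp [SimpleGraph.Walk.support_cons, hm])) ⟨y, hy⟩
      · obtain ⟨x0, hx0⟩ := ha
        exfalso
        exact hcv (hx ▸ (hf.2.2.2.1 l i x x0 hl (by rw [hx, hx0])))

lemma amal_dist_cross (hconn : ∀ i, (Gs i).Connected) {i j : ι} (hij : i ≠ j)
    (x : Vi i) (y : Vi j) :
    G.dist (f i x) (f j y) = (Gs i).dist x (v0 i) + (Gs j).dist (v0 j) y := by
  classical
  by_cases hx : x = v0 i
  · subst hx
    rw [SimpleGraph.dist_self, zero_add, hf.2.1 i, ← hf.2.1 j]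
    exact amal_dist_block hf (hconn j) (v0 j) y
  by_cases hy : y = v0 j
  · subst hy
    rw [SimpleGraph.dist_self, add_zero, hf.2.1 j, ← hf.2.1 i]
    exact amal_dist_block hf (hconn i) x (v0 i)
  refine le_antisymm ?_ ?_
  · have e1 : G.dist (f i x) v = (Gs i).dist x (v0 i) := by
      conv_lhs => rw [← hf.2.1 i]
      exact amal_dist_block hf (hconn i) x (v0 i)
    have e2 : G.dist v (f j y) = (Gs j).dist (v0 j) y := by
      conv_lhs => rw [← hf.2.1 j]
      exact amal_dist_block hf (hconn j) (v0 j) y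
    calc G.dist (f i x) (f j y) ≤ G.dist (f i x) v + G.dist v (f j y) :=
          (amal_connected hf hconn).dist_triangle
      _ = (Gs i).dist x (v0 i) + (Gs j).dist (v0 j) y := by rw [e1, e2]
  · obtain ⟨w, hw⟩ := (amal_preconnected hf hconn (f i x) (f j y)).exists_walk_length_eq_dist
    have hvmem : v ∈ w.support := by
      by_contra hvm
      obtain ⟨z, hz⟩ := amal_walk_stay hf i w hvm ⟨x, rfl⟩
      have : f i z = v := hf.2.2.2.1 i j z y hij hz
      exact (amal_ne_v hf hy) (hz ▸ this)
    have hsplit := SimpleGraph.Walk.take_spec w hvmem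
    have hlen : (w.takeUntil v hvmem).length + (w.dropUntil v hvmem).length = w.length := by
      rw [← SimpleGraph.Walk.length_append, hsplit]
    have e1 : G.dist (f i x) v = (Gs i).dist x (v0 i) := by
      conv_lhs => rw [← hf.2.1 i]
      exact amal_dist_block hf (hconn i) x (v0 i)
    have e2 : G.dist v (f j y) = (Gs j).dist (v0 j) y := by
      conv_lhs => rw [← hf.2.1 j]
      exact amal_dist_block hf (hconn j) (v0 j) y
    have h1 : (Gs i).dist x (v0 i) ≤ (w.takeUntil v hvmem).length :=
      e1.symm.trans_le (SimpleGraph.dist_le _)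
    have h2 : (Gs j).dist (v0 j) y ≤ (w.dropUntil v hvmem).length :=
      e2.symm.trans_le (SimpleGraph.dist_le _)
    omega

end Amal


set_option maxHeartbeats 1600000 in
theorem stmt18 {V : Type*} [Fintype V] (n k : ℕ) (hn : 2 ≤ n) (hk : 1 ≤ k)
    (hkn : k ≤ n)
    (sz : Fin n → ℕ) (hsz : ∀ i, 3 ≤ sz i)
    (P : Finset (Fin n)) (hP : P.card = k)
    (Gs : ∀ i, SimpleGraph (Fin (sz i)))
    (hGsP : ∀ i ∈ P, Gs i = SimpleGraph.pathGraph (sz i))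
    (hGsK : ∀ i ∉ P, Gs i = (⊤ : SimpleGraph (Fin (sz i))))
    (v0 : ∀ i, Fin (sz i))
    (hv0 : ∀ i ∈ P, (v0 i : ℕ) ≠ 0 ∧ (v0 i : ℕ) ≠ sz i - 1)
    (G : SimpleGraph V) (v : V)
    (h : IsVertexAmal Gs v0 G v) :
    metricDim G = (∑ i ∈ Finset.univ \ P, (sz i - 2)) + max k 1 + (k - 1) := by
  classical
  obtain ⟨f, hf⟩ := h
  have finj := hf.1
  have hfv := hf.2.1
  have hcross := hf.2.2.2.1
  have hsurj := hf.2.2.2.2.1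
  have h0 : ∀ i : Fin n, 0 < sz i := fun i => by have := hsz i; omega
  have h1 : ∀ i : Fin n, 1 < sz i := fun i => by have := hsz i; omega
  have hconn : ∀ i, (Gs i).Connected := by
    intro i
    haveI : Nonempty (Fin (sz i)) := ⟨⟨0, h0 i⟩⟩
    by_cases hiP : i ∈ P
    · rw [hGsP i hiP]
      exact SimpleGraph.Connected.mk (pathGraph_preconnected (sz i))
    · rw [hGsK i hiP]
      refine SimpleGraph.Connected.mk ?_
      intro a b
      by_cases hab : a = b
      · exact hab ▸ SimpleGraph.Reachable.refl _
      · exact SimpleGraph.Adj.reachable (by simpa using hab)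
  have hGconn : G.Connected := amal_connected hf hconn
  have hdb : ∀ i (x y : Fin (sz i)), G.dist (f i x) (f i y) = (Gs i).dist x y :=
    fun i x y => amal_dist_block hf (hconn i) x y
  have hdc : ∀ i j (x : Fin (sz i)) (y : Fin (sz j)), i ≠ j →
      G.dist (f i x) (f j y) = (Gs i).dist x (v0 i) + (Gs j).dist (v0 j) y :=
    fun i j x y hij => amal_dist_cross hf hconn hij x y
  have hdP : ∀ i, i ∈ P → ∀ x y : Fin (sz i), (Gs i).dist x y = Nat.dist x.1 y.1 := by
    intro i hi x y; rw [hGsP i hi]; exact pathGraph_dist x y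
  have hdK1 : ∀ i, i ∉ P → ∀ x y : Fin (sz i), x ≠ y → (Gs i).dist x y = 1 := by
    intro i hi x y hxy; rw [hGsK i hi]; exact SimpleGraph.dist_top_of_ne hxy
  have hdzero : ∀ i (x y : Fin (sz i)), (Gs i).dist x y = 0 → x = y :=
    fun i x y hxy => ((hconn i).dist_eq_zero_iff).mp hxy
  have hdist0 : ∀ a b : V, G.dist a b = 0 → a = b :=
    fun a b hab => (hGconn.dist_eq_zero_iff).mp hab
  have hvne : ∀ i (x : Fin (sz i)), x ≠ v0 i → f i x ≠ v := fun i x hx => amal_ne_v hf hx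
  have hc1 : ∀ i ∈ P, 1 ≤ (v0 i).1 ∧ (v0 i).1 < sz i - 1 := by
    intro i hi
    have h2 := hv0 i hi
    have h3 := (v0 i).2
    omega
  obtain ⟨i0, hi0⟩ : P.Nonempty := Finset.card_pos.mp (by rw [hP]; omega)
  set tt : ∀ i : Fin n, Fin (sz i) :=
    fun i => if (v0 i : ℕ) = 0 then ⟨1, h1 i⟩ else ⟨0, h0 i⟩ with htt_def
  have htt : ∀ i, tt i ≠ v0 i := by
    intro i heq
    by_cases hc : (v0 i : ℕ) = 0
    · have hval : (tt i : ℕ) = 1 := by rw [htt_def]; simp [hc]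
      rw [heq, hc] at hval
      exact one_ne_zero hval.symm
    · have hval : (tt i : ℕ) = 0 := by rw [htt_def]; simp [hc]
      rw [heq] at hval
      exact hc hval
  set WK : Finset V := (Finset.univ \ P).biUnion
      (fun i => (Finset.univ.filter
        (fun x : Fin (sz i) => x ≠ v0 i ∧ x ≠ tt i)).image (f i)) with hWK_def
  set WS : Finset V := P.image (fun i => f i ⟨0, h0 i⟩) with hWS_def
  set WE : Finset V := (P.erase i0).image
      (fun i => f i ⟨sz i - 1, Nat.sub_lt (h0 i) one_pos⟩) with hWE_def
  set W : Finset V := WK ∪ WS ∪ WE with hW_def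
  have hmemWK : ∀ a : V, a ∈ WK ↔
      ∃ i, i ∉ P ∧ ∃ x : Fin (sz i), (x ≠ v0 i ∧ x ≠ tt i) ∧ f i x = a := by
    intro a
    rw [hWK_def]
    simp only [Finset.mem_biUnion, Finset.mem_sdiff, Finset.mem_univ, true_and,
      Finset.mem_image, Finset.mem_filter]
  have hmemWS : ∀ a : V, a ∈ WS ↔ ∃ i ∈ P, f i ⟨0, h0 i⟩ = a := by
    intro a; rw [hWS_def]; simp [Finset.mem_image]
  have hmemWE : ∀ a : V, a ∈ WE ↔
      ∃ i, i ∈ P ∧ i ≠ i0 ∧ f i ⟨sz i - 1, Nat.sub_lt (h0 i) one_pos⟩ = a := by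
    intro a; rw [hWE_def]
    simp only [Finset.mem_image, Finset.mem_erase]
    tauto
  -- cardinalities
  have hcardWK : WK.card = ∑ i ∈ Finset.univ \ P, (sz i - 2) := by
    rw [hWK_def, Finset.card_biUnion]
    · refine Finset.sum_congr rfl ?_
      intro i hi
      rw [Finset.card_image_of_injective _ (finj i)]
      have heq : (Finset.univ.filter (fun x : Fin (sz i) => x ≠ v0 i ∧ x ≠ tt i))
          = (Finset.univ.erase (v0 i)).erase (tt i) := by
        ext x
        simp only [Finset.mem_filter, Finset.mem_univ, true_and, Finset.mem_erase]
        tauto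
      rw [heq, Finset.card_erase_of_mem (Finset.mem_erase.mpr ⟨htt i, Finset.mem_univ _⟩),
        Finset.card_erase_of_mem (Finset.mem_univ _), Finset.card_univ, Fintype.card_fin]
      omega
    · intro i hi j hj hij
      rw [Function.onFun, Finset.disjoint_left]
      intro a hai haj
      simp only [Finset.mem_image, Finset.mem_filter, Finset.mem_univ, true_and] at hai haj
      obtain ⟨x, ⟨hx1, hx2⟩, hxa⟩ := hai
      obtain ⟨y, ⟨hy1, hy2⟩, hya⟩ := haj
      exact hvne i x hx1 (hcross i j x y hij (by rw [hxa, hya]))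
  have hcardWS : WS.card = k := by
    rw [hWS_def, Finset.card_image_of_injOn, hP]
    intro i hi j hj hij
    by_contra hne
    have hv : f i ⟨0, h0 i⟩ = v := hcross i j _ _ hne hij
    have hthis : (⟨0, h0 i⟩ : Fin (sz i)) = v0 i := finj i (by rw [hv, ← hfv i])
    have h7 : (v0 i).1 = 0 := by rw [← hthis]
    exact (hv0 i hi).1 h7
  have hcardWE : WE.card = k - 1 := by
    rw [hWE_def, Finset.card_image_of_injOn, Finset.card_erase_of_mem hi0, hP]
    intro i hi j hj hij
    simp only [Finset.coe_erase, Set.mem_diff, Finset.mem_coe] at hi hj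
    by_contra hne
    have hv : f i ⟨sz i - 1, Nat.sub_lt (h0 i) one_pos⟩ = v := hcross i j _ _ hne hij
    have hthis : (⟨sz i - 1, Nat.sub_lt (h0 i) one_pos⟩ : Fin (sz i)) = v0 i :=
      finj i (by rw [hv, ← hfv i])
    have h5 : (v0 i).1 = sz i - 1 := by rw [← hthis]
    exact (hv0 i hi.1).2 h5
  have hdisjKS : Disjoint WK WS := by
    rw [Finset.disjoint_left]
    intro a haK haS
    obtain ⟨i, hiP, x, ⟨hx1, hx2⟩, hxa⟩ := (hmemWK a).mp haK
    obtain ⟨j, hjP, hja⟩ := (hmemWS a).mp haS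
    have hij : i ≠ j := fun hh => hiP (hh ▸ hjP)
    exact hvne i x hx1 (hcross i j _ _ hij (by rw [hxa, hja]))
  have hdisjKE : Disjoint WK WE := by
    rw [Finset.disjoint_left]
    intro a haK haE
    obtain ⟨i, hiP, x, ⟨hx1, hx2⟩, hxa⟩ := (hmemWK a).mp haK
    obtain ⟨j, hjP, hji0, hja⟩ := (hmemWE a).mp haE
    have hij : i ≠ j := fun hh => hiP (hh ▸ hjP)
    exact hvne i x hx1 (hcross i j _ _ hij (by rw [hxa, hja]))
  have hdisjSE : Disjoint WS WE := by
    rw [Finset.disjoint_left]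
    intro a haS haE
    obtain ⟨i, hiP, hia⟩ := (hmemWS a).mp haS
    obtain ⟨j, hjP, hji0, hja⟩ := (hmemWE a).mp haE
    by_cases hij : i = j
    · subst hij
      have hthis := finj i (hia.trans hja.symm)
      have h8 : (0 : ℕ) = sz i - 1 := congrArg Fin.val hthis
      have := hsz i
      omega
    · have hv' : f i ⟨0, h0 i⟩ = v := hcross i j _ _ hij (by rw [hia, hja])
      have hthis : (⟨0, h0 i⟩ : Fin (sz i)) = v0 i := finj i (by rw [hv', ← hfv i])
      have h7 : (v0 i).1 = 0 := by rw [← hthis]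
      exact (hv0 i hiP).1 h7
  have hcardW : W.card = (∑ i ∈ Finset.univ \ P, (sz i - 2)) + k + (k - 1) := by
    rw [hW_def, Finset.card_union_of_disjoint, Finset.card_union_of_disjoint hdisjKS,
      hcardWK, hcardWS, hcardWE]
    · simp [Finset.disjoint_union_left, hdisjKE, hdisjSE]
  have hres : resolves G W := by
    have hWSsub : ∀ i ∈ P, f i ⟨0, h0 i⟩ ∈ W := by
      intro i hi
      rw [hW_def]
      exact Finset.mem_union_left _
        (Finset.mem_union_right _ ((hmemWS _).mpr ⟨i, hi, rfl⟩))
    have hWEsub : ∀ i, i ∈ P → i ≠ i0 →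
        f i ⟨sz i - 1, Nat.sub_lt (h0 i) one_pos⟩ ∈ W := by
      intro i hi hne
      rw [hW_def]
      exact Finset.mem_union_right _ ((hmemWE _).mpr ⟨i, hi, hne, rfl⟩)
    have hWKsub : ∀ i, i ∉ P → ∀ x : Fin (sz i), x ≠ v0 i → x ≠ tt i → f i x ∈ W := by
      intro i hi x hx1 hx2
      rw [hW_def]
      exact Finset.mem_union_left _
        (Finset.mem_union_left _ ((hmemWK _).mpr ⟨i, hi, x, ⟨hx1, hx2⟩, rfl⟩))
    have key_same : ∀ i (x y : Fin (sz i)), f i x ∉ W → f i y ∉ W →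
        (∀ w ∈ W, G.dist (f i x) w = G.dist (f i y) w) → f i x = f i y := by
      intro i x y hxW hyW hagree
      by_cases hiP : i ∈ P
      · have h1' := hagree _ (hWSsub i hiP)
        rw [hdb, hdb, hdP i hiP, hdP i hiP] at h1'
        have hxy : x.1 = y.1 := by
          simp only [Nat.dist] at h1'
          omega
        exact congrArg (f i) (Fin.ext hxy)
      · have hx : x = v0 i ∨ x = tt i := by
          by_contra hcon
          push_neg at hcon
          exact hxW (hWKsub i hiP x hcon.1 hcon.2)
        have hy : y = v0 i ∨ y = tt i := by
          by_contra hcon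
          push_neg at hcon
          exact hyW (hWKsub i hiP y hcon.1 hcon.2)
        have hii0 : i ≠ i0 := fun hh => hiP (hh ▸ hi0)
        have hagree1 := hagree _ (hWSsub i0 hi0)
        have hA : G.dist (f i (v0 i)) (f i0 ⟨0, h0 i0⟩) = (v0 i0).1 := by
          rw [hfv i, ← hfv i0, hdb, hdP i0 hi0]
          simp [Nat.dist]
        have hB : G.dist (f i (tt i)) (f i0 ⟨0, h0 i0⟩) = 1 + (v0 i0).1 := by
          rw [hdc i i0 _ _ hii0, hdK1 i hiP _ _ (htt i), hdP i0 hi0]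
          simp [Nat.dist]
        rcases hx with rfl | rfl <;> rcases hy with rfl | rfl
        · rfl
        · rw [hA, hB] at hagree1; omega
        · rw [hB, hA] at hagree1; omega
        · rfl
    have keyPP : ∀ i j (x : Fin (sz i)) (y : Fin (sz j)), i ≠ j → i ∈ P → j ∈ P →
        i ≠ i0 → x ≠ v0 i → y ≠ v0 j →
        (∀ w ∈ W, G.dist (f i x) w = G.dist (f j y) w) → False := by
      intro i j x y hij hiP hjP hii0 hx hy hagree
      have e1 := hagree _ (hWSsub i hiP)
      have e2 := hagree _ (hWSsub j hjP)
      have e3 := hagree _ (hWEsub i hiP hii0)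
      rw [hdb, hdP i hiP, hdc j i y ⟨0, h0 i⟩ (Ne.symm hij), hdP j hjP, hdP i hiP] at e1
      rw [hdc i j x ⟨0, h0 j⟩ hij, hdb, hdP i hiP, hdP j hjP, hdP j hjP] at e2
      rw [hdb, hdP i hiP,
        hdc j i y ⟨sz i - 1, Nat.sub_lt (h0 i) one_pos⟩ (Ne.symm hij),
        hdP j hjP, hdP i hiP] at e3
      have hxv : x.1 ≠ (v0 i).1 := fun hh => hx (Fin.ext hh)
      have hyv : y.1 ≠ (v0 j).1 := fun hh => hy (Fin.ext hh)
      have hxb := x.2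
      have hyb := y.2
      have hci := hc1 i hiP
      have hcj := hc1 j hjP
      simp only [Nat.dist] at e1 e2 e3
      omega
    have keyK : ∀ i j (x : Fin (sz i)) (y : Fin (sz j)), i ≠ j → i ∉ P →
        x ≠ v0 i → y ≠ v0 j → f i x ∉ W →
        (∀ w ∈ W, G.dist (f i x) w = G.dist (f j y) w) → False := by
      intro i j x y hij hiP hx hy hxW hagree
      have hxtt : x = tt i := by
        by_contra hcon
        exact hxW (hWKsub i hiP x hx hcon)
      subst hxtt
      obtain ⟨z, hz1, hz2⟩ : ∃ z : Fin (sz i), z ≠ v0 i ∧ z ≠ tt i := by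
        have hcard : ((Finset.univ.erase (v0 i)).erase (tt i)).Nonempty := by
          rw [← Finset.card_pos,
            Finset.card_erase_of_mem (Finset.mem_erase.mpr ⟨htt i, Finset.mem_univ _⟩),
            Finset.card_erase_of_mem (Finset.mem_univ _), Finset.card_univ, Fintype.card_fin]
          have := hsz i; omega
        obtain ⟨z, hz⟩ := hcard
        exact ⟨z, (Finset.mem_erase.mp (Finset.mem_erase.mp hz).2).1,
          (Finset.mem_erase.mp hz).1⟩
      have hwz : f i z ∈ W := hWKsub i hiP z hz1 hz2
      have e := hagree _ hwz
      rw [hdb, hdK1 i hiP _ _ (Ne.symm hz2), hdc j i y z (Ne.symm hij),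
        hdK1 i hiP _ _ (Ne.symm hz1)] at e
      have hd0 : (Gs j).dist y (v0 j) ≠ 0 := fun hh => hy (hdzero j _ _ hh)
      omega
    intro u u' hagree
    obtain ⟨i, x, rfl⟩ := hsurj u
    obtain ⟨j, y, rfl⟩ := hsurj u'
    by_cases hxW : f i x ∈ W
    · have e := hagree _ hxW
      rw [SimpleGraph.dist_self] at e
      exact (hdist0 _ _ e.symm).symm
    by_cases hyW : f j y ∈ W
    · have e := hagree _ hyW
      rw [SimpleGraph.dist_self ] at e
      exact hdist0 _ _ e
    by_cases hx0 : x = v0 i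
    · have hxv : f i x = v := by rw [hx0, hfv i]
      have hrepr : f j (v0 j) = f i x := by rw [hfv j, hxv]
      rw [← hrepr] at hagree hxW ⊢
      exact key_same j (v0 j) y hxW hyW hagree
    by_cases hy0 : y = v0 j
    · have hyv : f j y = v := by rw [hy0, hfv j]
      have hrepr : f i (v0 i) = f j y := by rw [hfv i, hyv]
      rw [← hrepr] at hagree hyW ⊢
      exact key_same i x (v0 i) hxW hyW hagree
    by_cases hij : i = j
    · subst hij
      exact key_same i x y hxW hyW hagree
    by_cases hiP : i ∈ P
    · by_cases hjP : j ∈ P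
      · by_cases hii0 : i = i0
        · have hjj : j ≠ i0 := fun hh => hij (hii0.trans hh.symm)
          exact (keyPP j i y x (Ne.symm hij) hjP hiP hjj hy0 hx0
            (fun w hw => (hagree w hw).symm)).elim
        · exact (keyPP i j x y hij hiP hjP hii0 hx0 hy0 hagree).elim
      · exact (keyK j i y x (Ne.symm hij) hjP hy0 hx0 hyW
          (fun w hw => (hagree w hw).symm)).elim
    · exact (keyK i j x y hij hiP hx0 hy0 hxW hagree).elim
  have hlow : ∀ W' : Finset V, resolves G W' →
      (∑ i ∈ Finset.univ \ P, (sz i - 2)) + k + (k - 1) ≤ W'.card := by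
    intro W' hres'
    set Si : Fin n → Finset V :=
      fun i => (Finset.univ.filter (fun x : Fin (sz i) => x ≠ v0 i)).image (f i) with hSi_def
    set Arm : Fin n → Bool → Finset V := fun i b =>
      (Finset.univ.filter (fun x : Fin (sz i) =>
        if b then (v0 i).1 < x.1 else x.1 < (v0 i).1)).image (f i) with hArm_def
    have hmemSi : ∀ i (a : V), a ∈ Si i ↔ ∃ x : Fin (sz i), x ≠ v0 i ∧ f i x = a := by
      intro i a; rw [hSi_def]; simp [Finset.mem_image]
    have hmemArm : ∀ i b (a : V), a ∈ Arm i b ↔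
        ∃ x : Fin (sz i), (if b then (v0 i).1 < x.1 else x.1 < (v0 i).1) ∧ f i x = a := by
      intro i b a; rw [hArm_def]; simp [Finset.mem_image]
    have hSibound : ∀ i, i ∉ P → sz i - 2 ≤ (W' ∩ Si i).card := by
      intro i hiP
      have hTcard : ((Si i) \ W').card ≤ 1 := by
        rw [Finset.card_le_one]
        intro a ha b hb
        rw [Finset.mem_sdiff] at ha hb
        obtain ⟨x, hx, rfl⟩ := (hmemSi i a).mp ha.1
        obtain ⟨y, hyv, rfl⟩ := (hmemSi i b).mp hb.1
        apply hres'
        intro w hw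
        obtain ⟨l, z, rfl⟩ := hsurj w
        by_cases hli : l = i
        · subst hli
          by_cases hz : z = v0 l
          · rw [hdb, hdb, hz, hdK1 l hiP _ _ hx, hdK1 l hiP _ _ hyv]
          · have hzx : x ≠ z := fun hh => ha.2 (hh ▸ hw)
            have hzy : y ≠ z := fun hh => hb.2 (hh ▸ hw)
            rw [hdb, hdb, hdK1 l hiP x z hzx, hdK1 l hiP y z hzy]
        · have hil : i ≠ l := fun hh => hli hh.symm
          rw [hdc i l x z hil, hdc i l y z hil, hdK1 i hiP _ _ hx, hdK1 i hiP _ _ hyv]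
      have hSicard : (Si i).card = sz i - 1 := by
        rw [hSi_def, Finset.card_image_of_injective _ (finj i), Finset.filter_ne',
          Finset.card_erase_of_mem (Finset.mem_univ _), Finset.card_univ, Fintype.card_fin]
      have hsub : Si i ⊆ (W' ∩ Si i) ∪ ((Si i) \ W') := by
        intro a ha
        by_cases haW : a ∈ W'
        · exact Finset.mem_union_left _ (Finset.mem_inter.mpr ⟨haW, ha⟩)
        · exact Finset.mem_union_right _ (Finset.mem_sdiff.mpr ⟨ha, haW⟩)
      have hcle := Finset.card_le_card hsub
      have hcun := Finset.card_union_le (W' ∩ Si i) ((Si i) \ W')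
      have := hsz i
      omega
    have hArmKey : ∀ i b, i ∈ P → (W' ∩ Arm i b) = ∅ →
        ∀ x : Fin (sz i), Nat.dist x.1 (v0 i).1 = 1 →
        (if b then (v0 i).1 < x.1 else x.1 < (v0 i).1) →
        ∀ w ∈ W', G.dist (f i x) w = 1 + G.dist v w := by
      intro i b hiP hempty x hx1 hxb w hw
      obtain ⟨l, z, rfl⟩ := hsurj w
      by_cases hz : z = v0 l
      · subst hz
        rw [hfv l, SimpleGraph.dist_self, ← hfv i, hdb, hdP i hiP]
        omega
      · by_cases hli : l = i
        · subst hli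
          have hzarm : ¬(if b then (v0 l).1 < z.1 else z.1 < (v0 l).1) := by
            intro hcon
            have hmm : f l z ∈ W' ∩ Arm l b :=
              Finset.mem_inter.mpr ⟨hw, (hmemArm l b _).mpr ⟨z, hcon, rfl⟩⟩
            rw [hempty] at hmm
            exact absurd hmm (Finset.notMem_empty _)
          have hzvv : z.1 ≠ (v0 l).1 := fun hh => hz (Fin.ext hh)
          rw [hdb, hdP l hiP, ← hfv l, hdb, hdP l hiP]
          simp only [Nat.dist] at hx1 ⊢
          cases b <;> simp only [if_true, if_false, Bool.false_eq_true] at hxb hzarm <;> omega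
        · have hil : i ≠ l := fun hh => hli hh.symm
          rw [hdc i l x z hil, hdP i hiP, ← hfv l, hdb]
          omega
    have hArmTwo : ∀ p q : Fin n × Bool, p.1 ∈ P → q.1 ∈ P →
        (W' ∩ Arm p.1 p.2) = ∅ → (W' ∩ Arm q.1 q.2) = ∅ → p = q := by
      rintro ⟨i, b⟩ ⟨j, b'⟩ hiP hjP he1 he2
      have hci := hc1 i hiP
      have hcj := hc1 j hjP
      have hvi := (v0 i).2
      have hvj := (v0 j).2
      refine (?_ : (i, b) = (j, b'))
      set x : Fin (sz i) := ⟨if b then (v0 i).1 + 1 else (v0 i).1 - 1, by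
        cases b <;> simp <;> omega⟩ with hx_def
      set y : Fin (sz j) := ⟨if b' then (v0 j).1 + 1 else (v0 j).1 - 1, by
        cases b' <;> simp <;> omega⟩ with hy_def
      have hx1 : Nat.dist x.1 (v0 i).1 = 1 := by
        rw [hx_def]; cases b <;> simp [Nat.dist] <;> omega
      have hy1 : Nat.dist y.1 (v0 j).1 = 1 := by
        rw [hy_def]; cases b' <;> simp [Nat.dist] <;> omega
      have hxb : (if b then (v0 i).1 < x.1 else x.1 < (v0 i).1) := by
        rw [hx_def]; cases b <;> simp <;> omega
      have hyb : (if b' then (v0 j).1 < y.1 else y.1 < (v0 j).1) := by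
        rw [hy_def]; cases b' <;> simp <;> omega
      have hd1 := hArmKey i b hiP he1 x hx1 hxb
      have hd2 := hArmKey j b' hjP he2 y hy1 hyb
      have heq : f i x = f j y := hres' _ _ (fun w hw => (hd1 w hw).trans (hd2 w hw).symm)
      by_cases hij : i = j
      · subst hij
        have hxy : x = y := finj i heq
        have hval : (if b = true then (v0 i).1 + 1 else (v0 i).1 - 1)
            = (if b' = true then (v0 i).1 + 1 else (v0 i).1 - 1) := congrArg Fin.val hxy
        have hbb : b = b' := by
          cases b <;> cases b' <;> try rfl
          all_goals first | (simp at hval; omega) | simp at hval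
        rw [hbb]
      · exfalso
        have hxv0 : f i x = v := hcross i j x y hij heq
        have hxeq : x = v0 i := finj i (by rw [hxv0, hfv i])
        have hval : (if b = true then (v0 i).1 + 1 else (v0 i).1 - 1) = (v0 i).1 :=
          congrArg Fin.val hxeq
        cases b <;> simp at hval <;> omega
    set A : Finset (Fin n × Bool) := P ×ˢ ({false, true} : Finset Bool) with hA_def
    set E : Finset (Fin n × Bool) :=
      A.filter (fun p => (W' ∩ Arm p.1 p.2) = ∅) with hE_def
    have hEcard : E.card ≤ 1 := by
      rw [Finset.card_le_one]
      intro p hp q hq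
      rw [hE_def, Finset.mem_filter, hA_def, Finset.mem_product] at hp hq
      exact hArmTwo p q hp.1.1 hq.1.1 hp.2 hq.2
    have hAcard : A.card = 2 * k := by
      rw [hA_def, Finset.card_product, hP]
      simp
      omega
    set F : Fin n × Bool → Finset V := fun p =>
      if p.1 ∈ P then W' ∩ Arm p.1 p.2 else if p.2 then W' ∩ Si p.1 else ∅ with hF_def
    set I : Finset (Fin n × Bool) :=
      ((Finset.univ \ P) ×ˢ ({true} : Finset Bool)) ∪ (A \ E) with hI_def
    have hFdisj : ∀ p q : Fin n × Bool, p ≠ q → Disjoint (F p) (F q) := by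
      rintro ⟨i, b⟩ ⟨j, b'⟩ hpq
      rw [Finset.disjoint_left]
      intro a hap haq
      simp only [hF_def] at hap haq
      by_cases hij : i = j
      · subst hij
        have hbb : b ≠ b' := fun hh => hpq (by rw [hh])
        by_cases hiP : i ∈ P
        · rw [if_pos hiP] at hap haq
          obtain ⟨x, hx, hxa⟩ := (hmemArm i b a).mp (Finset.mem_inter.mp hap).2
          obtain ⟨y, hy, hya⟩ := (hmemArm i b' a).mp (Finset.mem_inter.mp haq).2
          have hxy : x = y := finj i (by rw [hxa, hya])
          subst hxy
          cases b <;> cases b' <;> simp at hx hy hbb <;> omega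
        · rw [if_neg hiP] at hap haq
          cases b <;> cases b' <;> simp at hap haq hbb
      · obtain ⟨x, hx, hxa⟩ : ∃ x : Fin (sz i), x ≠ v0 i ∧ f i x = a := by
          by_cases hiP : i ∈ P
          · rw [if_pos hiP] at hap
            obtain ⟨x, hx, hxa⟩ := (hmemArm i b a).mp (Finset.mem_inter.mp hap).2
            refine ⟨x, fun hh => ?_, hxa⟩
            rw [hh] at hx
            cases b <;> simp at hx <;> omega
          · rw [if_neg hiP] at hap
            cases b
            · exact absurd hap (Finset.notMem_empty _)
            · obtain ⟨x, hx, hxa⟩ := (hmemSi i a).mp (Finset.mem_inter.mp (by simpa using hap)).2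
              exact ⟨x, hx, hxa⟩
        obtain ⟨y, hy, hya⟩ : ∃ y : Fin (sz j), y ≠ v0 j ∧ f j y = a := by
          by_cases hjP : j ∈ P
          · rw [if_pos hjP] at haq
            obtain ⟨y, hy, hya⟩ := (hmemArm j b' a).mp (Finset.mem_inter.mp haq).2
            refine ⟨y, fun hh => ?_, hya⟩
            rw [hh] at hy
            cases b' <;> simp at hy <;> omega
          · rw [if_neg hjP] at haq
            cases b'
            · exact absurd haq (Finset.notMem_empty _)
            · obtain ⟨y, hy, hya⟩ := (hmemSi j a).mp (Finset.mem_inter.mp (by simpa using haq)).2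
              exact ⟨y, hy, hya⟩
        have : f i x = v := hcross i j x y hij (by rw [hxa, hya])
        exact hvne i x hx this
    have hbiU : (I.biUnion F).card = ∑ p ∈ I, (F p).card :=
      Finset.card_biUnion (fun p _ q _ hpq => hFdisj p q hpq)
    have hsubW : I.biUnion F ⊆ W' := by
      intro a ha
      obtain ⟨p, hp, hap⟩ := Finset.mem_biUnion.mp ha
      simp only [hF_def] at hap
      split_ifs at hap with h1 h2
      · exact (Finset.mem_inter.mp hap).1
      · exact (Finset.mem_inter.mp hap).1
      · exact absurd hap (Finset.notMem_empty _)
    have hIdisj : Disjoint ((Finset.univ \ P) ×ˢ ({true} : Finset Bool)) (A \ E) := by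
      rw [Finset.disjoint_left]
      rintro ⟨i, b⟩ hp hq
      rw [Finset.mem_product, Finset.mem_sdiff] at hp
      rw [Finset.mem_sdiff, hA_def, Finset.mem_product] at hq
      exact hp.1.2 hq.1.1
    have hsum : ∑ p ∈ I, (F p).card =
        (∑ p ∈ (Finset.univ \ P) ×ˢ ({true} : Finset Bool), (F p).card)
          + ∑ p ∈ A \ E, (F p).card := by
      rw [hI_def, Finset.sum_union hIdisj]
    have hsum1 : ∑ p ∈ (Finset.univ \ P) ×ˢ ({true} : Finset Bool), (F p).card
        = ∑ i ∈ Finset.univ \ P, (W' ∩ Si i).card := by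
      rw [Finset.sum_product]
      refine Finset.sum_congr rfl ?_
      intro i hi
      rw [Finset.sum_singleton]
      simp only [hF_def]
      simp [(Finset.mem_sdiff.mp hi).2]
    have hge1 : ∑ i ∈ Finset.univ \ P, (sz i - 2)
        ≤ ∑ i ∈ Finset.univ \ P, (W' ∩ Si i).card :=
      Finset.sum_le_sum (fun i hi => hSibound i (Finset.mem_sdiff.mp hi).2)
    have hge2 : A.card - E.card ≤ ∑ p ∈ A \ E, (F p).card := by
      have hEA : E ⊆ A := by rw [hE_def]; exact Finset.filter_subset _ _
      calc A.card - E.card = (A \ E).card := (Finset.card_sdiff_of_subset hEA).symm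
        _ = ∑ p ∈ A \ E, 1 := by simp
        _ ≤ ∑ p ∈ A \ E, (F p).card := Finset.sum_le_sum ?_
      intro p hp
      rw [Finset.mem_sdiff] at hp
      have hp1 : p.1 ∈ P := (Finset.mem_product.mp (by rw [hA_def] at hp; exact hp.1)).1
      have hne : (W' ∩ Arm p.1 p.2) ≠ ∅ := by
        intro hcon
        exact hp.2 (by rw [hE_def, Finset.mem_filter]; exact ⟨hp.1, hcon⟩)
      simp only [hF_def]
      rw [if_pos hp1]
      exact Finset.card_pos.mpr (Finset.nonempty_iff_ne_empty.mpr hne)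
    have hWcard : ∑ p ∈ I, (F p).card ≤ W'.card := hbiU ▸ Finset.card_le_card hsubW
    omega
  have hmax : max k 1 = k := max_eq_left hk
  rw [hmax]
  unfold metricDim
  apply le_antisymm
  · exact Nat.sInf_le ⟨W, hres, hcardW⟩
  · refine le_csInf ⟨_, W, hres, hcardW⟩ ?_
    rintro m ⟨W', hres', rfl⟩
    exact hlow W' hres'
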